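/- Let $c>0$, $\tau\ge 0$, $a_-<0$, $b_-<0$. Then the function $\chi_-(z)=z^2-cz+a_-+b_-e^{-zc\tau}$ has exactly one positive real zero $\lambda_1$, and this zero is simple with $\chi_-'(\lambda_1)>0$. -/

import Mathlib

/-- The function `χ₋(z) = z² - cz + a₋ + b₋ e^{-z c τ}` with `c > 0`, `τ ≥ 0`,
`a₋ < 0`, `b₋ < 0` has exactly one positive real zero `λ₁`, which is simple with
`χ₋'(λ₁) > 0`. -/
theorem chi_minus_unique_positive_zero (c τ a b : ℝ) (hc : 0 < c) (hτ : 0 ≤ τ)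
    (ha : a < 0) (hb : b < 0) :
    ∃ lam : ℝ, 0 < lam ∧
      lam ^ 2 - c * lam + a + b * Real.exp (-(lam * (c * τ))) = 0 ∧
      (∀ x : ℝ, 0 < x → x ^ 2 - c * x + a + b * Real.exp (-(x * (c * τ))) = 0 → x = lam) ∧
      0 < deriv (fun x : ℝ => x ^ 2 - c * x + a + b * Real.exp (-(x * (c * τ)))) lam := by
  set f : ℝ → ℝ := fun x => x ^ 2 - c * x + a + b * Real.exp (-(x * (c * τ))) with hf
  have hderiv : ∀ x : ℝ, HasDerivAt f
      (2 * x - c + b * (Real.exp (-(x * (c * τ))) * (-(c * τ)))) x := by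
    intro x
    have h1 : HasDerivAt (fun x : ℝ => x ^ 2) (2 * x) x := by
      simpa using hasDerivAt_pow 2 x
    have h2 : HasDerivAt (fun x : ℝ => c * x) c x := by
      simpa using (hasDerivAt_id x).const_mul c
    have h3 : HasDerivAt (fun x : ℝ => -(x * (c * τ))) (-(c * τ)) x := by
      exact (hasDerivAt_mul_const (c * τ)).neg
    have h4 : HasDerivAt (fun x : ℝ => Real.exp (-(x * (c * τ))))
        (Real.exp (-(x * (c * τ))) * (-(c * τ))) x := h3.exp
    exact ((h1.sub h2).add_const a).add (h4.const_mul b)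
  have hcont : Continuous f := by
    simp only [hf]; fun_prop
  have hderivpos : ∀ x : ℝ, c < x →
      0 < 2 * x - c + b * (Real.exp (-(x * (c * τ))) * (-(c * τ))) := by
    intro x hx
    have hexp : 0 < Real.exp (-(x * (c * τ))) := Real.exp_pos _
    have hct : 0 ≤ c * τ := mul_nonneg hc.le hτ
    have h2 : 0 ≤ (-b) * (Real.exp (-(x * (c * τ))) * (c * τ)) :=
      mul_nonneg (neg_nonneg.mpr hb.le) (mul_nonneg hexp.le hct)
    have h3 : b * (Real.exp (-(x * (c * τ))) * (-(c * τ)))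
        = (-b) * (Real.exp (-(x * (c * τ))) * (c * τ)) := by ring
    linarith
  have hmono : StrictMonoOn f (Set.Ici c) := by
    apply strictMonoOn_of_deriv_pos (convex_Ici c) (hcont.continuousOn)
    intro x hx
    rw [interior_Ici] at hx
    rw [(hderiv x).deriv]
    exact hderivpos x hx
  -- any positive zero is > c
  have hzero_gt : ∀ x : ℝ, 0 < x → f x = 0 → c < x := by
    intro x hx hfx
    have hexp : 0 < Real.exp (-(x * (c * τ))) := Real.exp_pos _
    simp only [hf] at hfx
    have hbe : 0 < (-b) * Real.exp (-(x * (c * τ))) :=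
      mul_pos (neg_pos.mpr hb) hexp
    have : 0 < x * (x - c) := by nlinarith
    nlinarith
  -- existence
  have hfc : f c < 0 := by
    have hexp : 0 < Real.exp (-(c * (c * τ))) := Real.exp_pos _
    simp only [hf]
    nlinarith [mul_pos (neg_pos.mpr hb) hexp]
  set M : ℝ := c + 1 + |a| + |b| with hM
  have hMc : c < M := by
    have h1 : (0:ℝ) ≤ |a| := abs_nonneg a
    have h2 : (0:ℝ) ≤ |b| := abs_nonneg b
    linarith
  have hfM : 0 < f M := by
    have hM1 : 1 ≤ M := by
      have h1 : (0:ℝ) ≤ |a| := abs_nonneg a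
      have h2 : (0:ℝ) ≤ |b| := abs_nonneg b
      linarith
    have hexp1 : Real.exp (-(M * (c * τ))) ≤ 1 := by
      apply Real.exp_le_one_iff.mpr
      have : 0 ≤ M * (c * τ) := by positivity
      linarith
    have hexp0 : 0 < Real.exp (-(M * (c * τ))) := Real.exp_pos _
    have hA : -|a| ≤ a := neg_abs_le a
    have hB : -|b| ≤ b := neg_abs_le b
    have hbe : b ≤ b * Real.exp (-(M * (c * τ))) := by nlinarith
    have hMsq : 1 + |a| + |b| ≤ M ^ 2 - c * M := by nlinarith
    simp only [hf]
    nlinarith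
  have hmem : (0:ℝ) ∈ Set.Icc (f c) (f M) := ⟨hfc.le, hfM.le⟩
  obtain ⟨lam, hlam_mem, hlam_eq⟩ :=
    intermediate_value_Icc hMc.le hcont.continuousOn hmem
  have hlamc : c < lam := hzero_gt lam (lt_of_lt_of_le hc hlam_mem.1) hlam_eq
  refine ⟨lam, lt_trans hc hlamc, hlam_eq, ?_, ?_⟩
  · intro x hx hfx
    exact hmono.injOn (le_of_lt (hzero_gt x hx hfx)) hlamc.le (hfx.trans hlam_eq.symm)
  · rw [(hderiv lam).deriv]
    exact hderivpos lam hlamc
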